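/- arXiv:2003.12653 — 2 statements merged into one kernel-verified Lean document; each statement's English description precedes it below -/
import Mathlib

section
/- For every non-negative integer n, 16^n · ∑_{k=0}^{n} C(-1/2, k)^2 · C(-1/2, n-k)^2 = ∑_{k=0}^{n} C(2k, k)^3 · C(k, n-k) · (-16)^{n-k}. -/
open Finset

private def cb (k : ℕ) : ℚ := ((2 * k).choose k : ℚ)

private lemma cb_zero : cb 0 = 1 := by norm_num [cb]

private lemma cb_one : cb 1 = 2 := by norm_num [cb]

private lemma cb_succ (k : ℕ) : ((k : ℚ) + 1) * cb (k + 1) = 2 * (2 * (k : ℚ) + 1) * cb k := by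
  have h := Nat.succ_mul_centralBinom_succ k
  simp only [Nat.centralBinom] at h
  unfold cb
  exact_mod_cast h

private lemma chooseQ (k m : ℕ) :
    ((m : ℚ) + 1) * (k.choose (m + 1) : ℚ) = ((k : ℚ) - m) * (k.choose m : ℚ) := by
  rcases lt_trichotomy m k with h | h | h
  · have h2 := Nat.choose_succ_right_eq k m
    have h3 : ((k.choose (m + 1) * (m + 1) : ℕ) : ℚ) = ((k.choose m * (k - m) : ℕ) : ℚ) := by
      exact_mod_cast congrArg (Nat.cast : ℕ → ℚ) h2
    push_cast [Nat.cast_sub h.le] at h3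
    linarith
  · subst h
    simp [Nat.choose_succ_self]
  · rw [Nat.choose_eq_zero_of_lt h, Nat.choose_eq_zero_of_lt (by omega)]
    simp

private lemma pascalQ (k m : ℕ) :
    (((k + 1).choose (m + 1) : ℕ) : ℚ) = (k.choose m : ℚ) + (k.choose (m + 1) : ℚ) := by
  rw [Nat.choose_succ_succ]
  push_cast
  ring

private lemma ringChoose_succ (r : ℚ) (k : ℕ) :
    ((k : ℚ) + 1) * Ring.choose r (k + 1) = (r - (k : ℚ)) * Ring.choose r k := by
  have hfac : ((Nat.factorial k : ℚ)) ≠ 0 := by exact_mod_cast Nat.factorial_ne_zero k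
  apply mul_left_cancel₀ hfac
  have h1 := Ring.descPochhammer_eq_factorial_smul_choose (R := ℚ) r (k + 1)
  rw [descPochhammer_succ_right, Polynomial.smeval_mul,
    Ring.descPochhammer_eq_factorial_smul_choose (R := ℚ) r k] at h1
  simp only [Polynomial.smeval_sub, Polynomial.smeval_X, Polynomial.smeval_natCast, pow_one,
    pow_zero, nsmul_eq_mul, Nat.factorial_succ, Nat.cast_mul, smul_eq_mul] at h1
  push_cast at h1
  linear_combination -h1

private lemma rc (k : ℕ) : Ring.choose (-(1 / 2) : ℚ) k = cb k / (-4) ^ k := by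
  induction k with
  | zero => simp [cb_zero]
  | succ k ih =>
    have hs := ringChoose_succ (-(1 / 2) : ℚ) k
    rw [ih] at hs
    have hk1 : (k : ℚ) + 1 ≠ 0 := by positivity
    have hcb := cb_succ k
    have h4 : ((-4 : ℚ)) ^ k ≠ 0 := by
      apply pow_ne_zero; norm_num
    have : Ring.choose (-(1 / 2) : ℚ) (k + 1) = (-(1/2) - k) * (cb k / (-4) ^ k) / ((k : ℚ) + 1) := by
      field_simp at hs ⊢
      linarith
    have e : cb (k + 1) = 2 * (2 * (k : ℚ) + 1) * cb k / ((k : ℚ) + 1) := by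
      field_simp
      linarith
    rw [this, pow_succ, e]
    field_simp
    ring

private def SA (n : ℕ) : ℚ := ∑ k ∈ range (n + 1), cb k ^ 2 * cb (n - k) ^ 2
private def gA (n k : ℕ) : ℚ :=
  4 * (k : ℚ) ^ 2 * (((n : ℚ) + 2) * (4 * (n : ℚ) + 5) - 2 * (k : ℚ) * (2 * (n : ℚ) + 3))
    * cb k ^ 2 * cb (n + 1 - k) ^ 2 / (((n + 1 - k : ℕ) : ℚ) + 1) ^ 2

private lemma keyA (n k : ℕ) (hk : k ≤ n) :
    256 * ((n : ℚ) + 1) ^ 3 * (cb k ^ 2 * cb (n - k) ^ 2)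
      - 8 * (2 * (n : ℚ) + 3) * (2 * (n : ℚ) ^ 2 + 6 * (n : ℚ) + 5) * (cb k ^ 2 * cb (n + 1 - k) ^ 2)
      + ((n : ℚ) + 2) ^ 3 * (cb k ^ 2 * cb (n + 2 - k) ^ 2)
    = gA n (k + 1) - gA n k := by
  obtain ⟨m, rfl⟩ : ∃ m, n = k + m := ⟨n - k, by omega⟩
  simp only [gA, show k + m - k = m from by omega, show k + m + 1 - k = m + 1 from by omega,
    show k + m + 2 - k = m + 2 from by omega, show k + m + 1 - (k + 1) = m from by omega]
  have ex : cb (k + 1) = 2 * (2 * (k : ℚ) + 1) * cb k / ((k : ℚ) + 1) := by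
    have := cb_succ k; field_simp; linarith
  have ey1 : cb (m + 1) = 2 * (2 * (m : ℚ) + 1) * cb m / ((m : ℚ) + 1) := by
    have := cb_succ m; field_simp; linarith
  have ey2 : cb (m + 2) = 2 * (2 * (m : ℚ) + 3) * cb (m + 1) / ((m : ℚ) + 2) := by
    have := cb_succ (m + 1); push_cast at this; field_simp; linarith
  rw [ey2, ey1, ex]
  have h1 : ((m : ℚ) + 1) ≠ 0 := by positivity
  have h2 : ((m : ℚ) + 2) ≠ 0 := by positivity
  have h3 : ((k : ℚ) + 1) ≠ 0 := by positivity
  push_cast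
  field_simp
  ring

private lemma gA_zero (n : ℕ) : gA n 0 = 0 := by simp [gA]

private lemma gA_top (n : ℕ) :
    gA n (n + 1) = 4 * ((n : ℚ) + 1) ^ 2
      * (((n : ℚ) + 2) * (4 * (n : ℚ) + 5) - 2 * ((n : ℚ) + 1) * (2 * (n : ℚ) + 3))
      * cb (n + 1) ^ 2 := by
  rw [gA, show n + 1 - (n + 1) = 0 from by omega, cb_zero]
  push_cast
  norm_num

private lemma recA (n : ℕ) :
    ((n : ℚ) + 2) ^ 3 * SA (n + 2)
      = 8 * (2 * (n : ℚ) + 3) * (2 * (n : ℚ) ^ 2 + 6 * (n : ℚ) + 5) * SA (n + 1)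
        - 256 * ((n : ℚ) + 1) ^ 3 * SA n := by
  have key : ∀ x ∈ range (n + 1),
      256 * ((n : ℚ) + 1) ^ 3 * (cb x ^ 2 * cb (n - x) ^ 2)
        - 8 * (2 * (n : ℚ) + 3) * (2 * (n : ℚ) ^ 2 + 6 * (n : ℚ) + 5) * (cb x ^ 2 * cb (n + 1 - x) ^ 2)
        + ((n : ℚ) + 2) ^ 3 * (cb x ^ 2 * cb (n + 2 - x) ^ 2)
      = gA n (x + 1) - gA n x := by
    intro x hx
    exact keyA n x (Nat.lt_succ_iff.mp (mem_range.mp hx))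
  have main : 256 * ((n : ℚ) + 1) ^ 3 * SA n
        - 8 * (2 * (n : ℚ) + 3) * (2 * (n : ℚ) ^ 2 + 6 * (n : ℚ) + 5)
          * (∑ k ∈ range (n + 1), cb k ^ 2 * cb (n + 1 - k) ^ 2)
        + ((n : ℚ) + 2) ^ 3 * (∑ k ∈ range (n + 1), cb k ^ 2 * cb (n + 2 - k) ^ 2)
      = gA n (n + 1) := by
    rw [SA, mul_sum, mul_sum, mul_sum, ← sum_sub_distrib, ← sum_add_distrib,
      Finset.sum_congr rfl key, Finset.sum_range_sub (gA n) (n + 1), gA_zero, sub_zero]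
  have hA2 : SA (n + 2) = (∑ k ∈ range (n + 1), cb k ^ 2 * cb (n + 2 - k) ^ 2)
      + cb (n + 1) ^ 2 * cb 1 ^ 2 + cb (n + 2) ^ 2 * cb 0 ^ 2 := by
    rw [SA, sum_range_succ, sum_range_succ]
    simp only [show n + 2 - (n + 1) = 1 from by omega, Nat.sub_self]
  have hA1 : SA (n + 1) = (∑ k ∈ range (n + 1), cb k ^ 2 * cb (n + 1 - k) ^ 2)
      + cb (n + 1) ^ 2 * cb 0 ^ 2 := by
    rw [SA, sum_range_succ]
    simp only [Nat.sub_self]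
  have hcb2 := cb_succ (n + 1)
  push_cast at hcb2
  have hsq : ((n : ℚ) + 2) ^ 2 * cb (n + 2) ^ 2 = 4 * (2 * (n : ℚ) + 3) ^ 2 * cb (n + 1) ^ 2 := by
    linear_combination (((n : ℚ) + 2) * cb (n + 2) + 2 * (2 * (n : ℚ) + 3) * cb (n + 1)) * hcb2
  rw [hA2, hA1, cb_zero, cb_one, gA_top] at *
  linear_combination main + ((n : ℚ) + 2) * hsq
private def SB (n : ℕ) : ℚ :=
  ∑ k ∈ range (n + 1), cb k ^ 3 * (k.choose (n - k) : ℚ) * (-16 : ℚ) ^ (n - k)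

private def gB (n k : ℕ) : ℚ :=
  -(k : ℚ) ^ 2 * ((n : ℚ) + 2) * cb k ^ 3 * (k.choose (n + 2 - k) : ℚ) * (-16 : ℚ) ^ (n + 2 - k)

private lemma keyB (n k : ℕ) (hk : k ≤ n) :
    256 * ((n : ℚ) + 1) ^ 3 * (cb k ^ 3 * (k.choose (n - k) : ℚ) * (-16 : ℚ) ^ (n - k))
      - 8 * (2 * (n : ℚ) + 3) * (2 * (n : ℚ) ^ 2 + 6 * (n : ℚ) + 5)
        * (cb k ^ 3 * (k.choose (n + 1 - k) : ℚ) * (-16 : ℚ) ^ (n + 1 - k))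
      + ((n : ℚ) + 2) ^ 3 * (cb k ^ 3 * (k.choose (n + 2 - k) : ℚ) * (-16 : ℚ) ^ (n + 2 - k))
    = gB n (k + 1) - gB n k := by
  obtain ⟨m, rfl⟩ : ∃ m, n = k + m := ⟨n - k, by omega⟩
  simp only [gB, show k + m - k = m from by omega, show k + m + 1 - k = m + 1 from by omega,
    show k + m + 2 - k = m + 2 from by omega, show k + m + 2 - (k + 1) = m + 1 from by omega]
  have hw : (((k + 1).choose (m + 1) : ℕ) : ℚ) = (k.choose m : ℚ) + (k.choose (m + 1) : ℚ) := by
    rw [Nat.choose_succ_succ]; push_cast; ring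
  have ex : cb (k + 1) = 2 * (2 * (k : ℚ) + 1) * cb k / ((k : ℚ) + 1) := by
    have := cb_succ k; field_simp; linarith
  have eu1 : (k.choose (m + 1) : ℚ) = ((k : ℚ) - m) * (k.choose m : ℚ) / ((m : ℚ) + 1) := by
    have := chooseQ k m; field_simp; linarith
  have eu2 : (k.choose (m + 2) : ℚ)
      = ((k : ℚ) - m - 1) * (k.choose (m + 1) : ℚ) / ((m : ℚ) + 2) := by
    have := chooseQ k (m + 1); push_cast at this; field_simp; linarith
  rw [pow_succ, pow_succ, hw, eu2, eu1, ex]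
  have h1 : ((m : ℚ) + 1) ≠ 0 := by positivity
  have h2 : ((m : ℚ) + 2) ≠ 0 := by positivity
  have h3 : ((k : ℚ) + 1) ≠ 0 := by positivity
  have h4 : (-16 : ℚ) ^ m ≠ 0 := by apply pow_ne_zero; norm_num
  push_cast
  field_simp
  ring

private lemma gB_zero (n : ℕ) : gB n 0 = 0 := by simp [gB]

private lemma gB_top (n : ℕ) :
    gB n (n + 1) = 16 * ((n : ℚ) + 1) ^ 3 * ((n : ℚ) + 2) * cb (n + 1) ^ 3 := by
  rw [gB, show n + 2 - (n + 1) = 1 from by omega, Nat.choose_one_right]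
  push_cast
  ring

private lemma recB (n : ℕ) :
    ((n : ℚ) + 2) ^ 3 * SB (n + 2)
      = 8 * (2 * (n : ℚ) + 3) * (2 * (n : ℚ) ^ 2 + 6 * (n : ℚ) + 5) * SB (n + 1)
        - 256 * ((n : ℚ) + 1) ^ 3 * SB n := by
  have key : ∀ x ∈ range (n + 1),
      256 * ((n : ℚ) + 1) ^ 3 * (cb x ^ 3 * (x.choose (n - x) : ℚ) * (-16 : ℚ) ^ (n - x))
        - 8 * (2 * (n : ℚ) + 3) * (2 * (n : ℚ) ^ 2 + 6 * (n : ℚ) + 5)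
          * (cb x ^ 3 * (x.choose (n + 1 - x) : ℚ) * (-16 : ℚ) ^ (n + 1 - x))
        + ((n : ℚ) + 2) ^ 3 * (cb x ^ 3 * (x.choose (n + 2 - x) : ℚ) * (-16 : ℚ) ^ (n + 2 - x))
      = gB n (x + 1) - gB n x := by
    intro x hx
    exact keyB n x (Nat.lt_succ_iff.mp (mem_range.mp hx))
  have main : 256 * ((n : ℚ) + 1) ^ 3 * SB n
        - 8 * (2 * (n : ℚ) + 3) * (2 * (n : ℚ) ^ 2 + 6 * (n : ℚ) + 5)
          * (∑ k ∈ range (n + 1), cb k ^ 3 * (k.choose (n + 1 - k) : ℚ) * (-16 : ℚ) ^ (n + 1 - k))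
        + ((n : ℚ) + 2) ^ 3
          * (∑ k ∈ range (n + 1), cb k ^ 3 * (k.choose (n + 2 - k) : ℚ) * (-16 : ℚ) ^ (n + 2 - k))
      = gB n (n + 1) := by
    rw [SB, mul_sum, mul_sum, mul_sum, ← sum_sub_distrib, ← sum_add_distrib,
      Finset.sum_congr rfl key, Finset.sum_range_sub (gB n) (n + 1), gB_zero, sub_zero]
  have hB2 : SB (n + 2) = (∑ k ∈ range (n + 1), cb k ^ 3 * (k.choose (n + 2 - k) : ℚ) * (-16 : ℚ) ^ (n + 2 - k))
      + cb (n + 1) ^ 3 * (((n + 1 : ℕ) : ℚ)) * (-16)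
      + cb (n + 2) ^ 3 := by
    rw [SB, sum_range_succ, sum_range_succ]
    simp only [show n + 2 - (n + 1) = 1 from by omega, Nat.sub_self, Nat.choose_one_right,
      Nat.choose_zero_right, Nat.cast_one, pow_one, pow_zero]
    ring
  have hB1 : SB (n + 1) = (∑ k ∈ range (n + 1), cb k ^ 3 * (k.choose (n + 1 - k) : ℚ) * (-16 : ℚ) ^ (n + 1 - k))
      + cb (n + 1) ^ 3 := by
    rw [SB, sum_range_succ]
    simp only [Nat.sub_self, Nat.choose_zero_right, Nat.cast_one, pow_zero]
    ring
  have hcb2 := cb_succ (n + 1)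
  push_cast at hcb2
  have hcube : ((n : ℚ) + 2) ^ 3 * cb (n + 2) ^ 3 = 8 * (2 * (n : ℚ) + 3) ^ 3 * cb (n + 1) ^ 3 := by
    linear_combination (((n : ℚ) + 2) ^ 2 * cb (n + 2) ^ 2
      + ((n : ℚ) + 2) * cb (n + 2) * 2 * (2 * (n : ℚ) + 3) * cb (n + 1)
      + 4 * (2 * (n : ℚ) + 3) ^ 2 * cb (n + 1) ^ 2) * hcb2
  rw [hB2, hB1, gB_top] at *
  push_cast
  linear_combination main + hcube
private lemma SA_eq_SB : ∀ n, SA n = SB n := by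
  intro n
  induction n using Nat.strong_induction_on with
  | _ n ih =>
    match n, ih with
    | 0, _ => norm_num [SA, SB, cb]
    | 1, _ => norm_num [SA, SB, cb, Finset.sum_range_succ]
    | (m + 2), ih =>
      have h0 := ih m (by omega)
      have h1 := ih (m + 1) (by omega)
      have hne : ((m : ℚ) + 2) ^ 3 ≠ 0 := by positivity
      apply mul_left_cancel₀ hne
      rw [recA, recB, h0, h1]

theorem stmt_9 (n : ℕ) :
    (16 : ℚ) ^ n * ∑ k ∈ range (n + 1),
        (Ring.choose (-(1 / 2) : ℚ) k) ^ 2 * (Ring.choose (-(1 / 2) : ℚ) (n - k)) ^ 2 =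
      ∑ k ∈ range (n + 1),
        ((2 * k).choose k : ℚ) ^ 3 * (k.choose (n - k) : ℚ) * (-16 : ℚ) ^ (n - k) := by
  have hp : ∀ j : ℕ, ((-4 : ℚ) ^ j) ^ 2 = 16 ^ j := by
    intro j
    rw [← pow_mul, mul_comm j 2, pow_mul]
    norm_num
  have hL : (16 : ℚ) ^ n * ∑ k ∈ range (n + 1),
      (Ring.choose (-(1 / 2) : ℚ) k) ^ 2 * (Ring.choose (-(1 / 2) : ℚ) (n - k)) ^ 2 = SA n := by
    rw [mul_sum, SA]
    refine Finset.sum_congr rfl fun k hk => ?_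
    have hkn : k ≤ n := Nat.lt_succ_iff.mp (mem_range.mp hk)
    rw [rc, rc, div_pow, div_pow, hp, hp, div_mul_div_comm, ← pow_add,
      show k + (n - k) = n from by omega]
    rw [mul_div_assoc', mul_comm ((16:ℚ)^n)]
    exact mul_div_cancel_right₀ _ (by positivity)
  rw [hL, SA_eq_SB]
  simp only [SB, cb]
end

section
/- Let n be a positive integer and k a non-negative integer with k ≤ n-1. Then in the ring ℤ[q], the polynomial ∑_{m=k}^{n-1} [2m+1]_q · qbinom(m+k, 2k) · qbinom(2k, k)^2 · q^{-(k+1)m}, after clearing the negative powers of q (i.e., multiplied by q^{(k+1)(n-1)}), is divisible by [n]_q^2. -/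
open Finset Polynomial

/-- The q-integer [n]_q = 1 + q + ⋯ + q^(n-1) as a polynomial in ℤ[q]. -/
noncomputable def qint (n : ℕ) : ℤ[X] := ∑ i ∈ range n, X ^ i

/-- The Gaussian (q-)binomial coefficient, defined via the q-Pascal recurrence,
a polynomial in q with integer coefficients. -/
noncomputable def qbinom : ℕ → ℕ → ℤ[X]
  | _, 0 => 1
  | 0, _ + 1 => 0
  | n + 1, k + 1 => qbinom n k + X ^ (k + 1) * qbinom n (k + 1)

/-- The q-factorial. -/
noncomputable def qfact : ℕ → ℤ[X]
  | 0 => 1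
  | n + 1 => qfact n * qint (n + 1)

lemma qint_succ (n : ℕ) : qint (n + 1) = qint n + X ^ n := by
  simp [qint, Finset.sum_range_succ]

lemma qint_add (a b : ℕ) : qint (a + b) = qint a + X ^ a * qint b := by
  induction b with
  | zero => simp [qint]
  | succ b ih =>
      rw [show a + (b + 1) = (a + b) + 1 from rfl, qint_succ, ih, qint_succ]
      rw [pow_add]
      ring

lemma qfact_succ (n : ℕ) : qfact (n + 1) = qfact n * qint (n + 1) := rfl

@[simp] lemma qbinom_zero (n : ℕ) : qbinom n 0 = 1 := by
  cases n <;> rfl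

lemma qbinom_succ (n k : ℕ) :
    qbinom (n + 1) (k + 1) = qbinom n k + X ^ (k + 1) * qbinom n (k + 1) := rfl

lemma qbinom_eq_zero : ∀ n k : ℕ, n < k → qbinom n k = 0 := by
  intro n
  induction n with
  | zero => intro k hk; cases k with
      | zero => omega
      | succ k => rfl
  | succ n ih =>
      intro k hk
      cases k with
      | zero => omega
      | succ k =>
          rw [qbinom_succ, ih k (by omega), ih (k+1) (by omega)]
          ring

lemma qbinom_self : ∀ n : ℕ, qbinom n n = 1 := by
  intro n
  induction n with
  | zero => rfl
  | succ n ih =>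
      rw [qbinom_succ, ih, qbinom_eq_zero n (n+1) (by omega)]
      ring

lemma qint_eval_one (n : ℕ) : (qint n).eval 1 = n := by
  simp [qint]

lemma qint_ne_zero (n : ℕ) (h : 0 < n) : qint n ≠ 0 := by
  intro hc
  have := qint_eval_one n
  rw [hc] at this
  simp at this
  omega

lemma qfact_ne_zero (n : ℕ) : qfact n ≠ 0 := by
  induction n with
  | zero => simp [qfact]
  | succ n ih => exact mul_ne_zero ih (qint_ne_zero (n+1) (by omega))

/-- Key factorial identity. -/
lemma qbinom_mul_qfact : ∀ n k d : ℕ, n = k + d →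
    qbinom n k * (qfact k * qfact d) = qfact n := by
  intro n
  induction n with
  | zero =>
      intro k d h
      obtain ⟨rfl, rfl⟩ : k = 0 ∧ d = 0 := by omega
      simp [qfact]
  | succ n ih =>
      intro k d h
      cases k with
      | zero =>
          obtain rfl : d = n + 1 := by omega
          simp [qfact]
      | succ k =>
          cases d with
          | zero =>
              obtain rfl : k = n := by omega
              rw [qbinom_self]
              simp [qfact]
          | succ d =>
              have hn : n = k + (d + 1) := by omega
              have hn' : n = (k + 1) + d := by omega
              rw [qbinom_succ]
              have h1 := ih k (d+1) hn
              have h2 := ih (k+1) d hn'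
              have key : qint (n+1) = qint (k+1) + X ^ (k+1) * qint (d+1) := by
                rw [show n + 1 = (k+1) + (d+1) by omega, qint_add]
              calc (qbinom n k + X ^ (k + 1) * qbinom n (k + 1)) *
                      (qfact (k+1) * qfact (d+1))
                  = (qbinom n k * (qfact k * qfact (d+1))) * qint (k+1)
                    + X ^ (k+1) * ((qbinom n (k+1) * (qfact (k+1) * qfact d)) * qint (d+1)) := by
                      rw [qfact_succ k, qfact_succ d]; ring
                _ = qfact n * qint (k+1) + X ^ (k+1) * (qfact n * qint (d+1)) := by
                      rw [h1, h2]
                _ = qfact n * qint (n+1) := by rw [key]; ring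
                _ = qfact (n+1) := (qfact_succ n).symm

lemma sub_one_mul_qint (m : ℕ) : (X - 1 : ℤ[X]) * qint m = X ^ m - 1 := by
  induction m with
  | zero => simp [qint]
  | succ m ih =>
      rw [qint_succ, mul_add, ih, pow_succ]
      ring

lemma X_sub_one_ne : (X - 1 : ℤ[X]) ≠ 0 := by
  intro h
  have := congrArg (Polynomial.eval 0) h
  simp at this

/-- The crucial q-integer identity [n+1][n+k+1] = q^(k+1)[n][n-k] + [2n+1][k+1], n = k+e+1. -/
lemma star (k e : ℕ) :
    qint (k+e+2) * qint (2*k+e+2)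
      = X ^ (k+1) * qint (k+e+1) * qint (e+1) + qint (2*k+2*e+3) * qint (k+1) := by
  have key : ∀ a b : ℕ, (X - 1 : ℤ[X])^2 * (qint a * qint b) = (X^a - 1) * (X^b - 1) := by
    intro a b
    calc (X - 1 : ℤ[X])^2 * (qint a * qint b)
        = ((X - 1) * qint a) * ((X - 1) * qint b) := by ring
      _ = (X^a - 1) * (X^b - 1) := by rw [sub_one_mul_qint, sub_one_mul_qint]
  apply mul_left_cancel₀ (pow_ne_zero 2 X_sub_one_ne)
  rw [mul_add, ← mul_assoc ((X-1:ℤ[X])^2) (X^(k+1) * qint (k+e+1)) (qint (e+1))]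
  have h1 := key (k+e+2) (2*k+e+2)
  have h2 := key (k+e+1) (e+1)
  have h3 := key (2*k+2*e+3) (k+1)
  calc ((X:ℤ[X]) - 1)^2 * (qint (k+e+2) * qint (2*k+e+2))
      = (X^(k+e+2) - 1) * (X^(2*k+e+2) - 1) := h1
    _ = X^(k+1) * ((X^(k+e+1) - 1) * (X^(e+1) - 1))
        + (X^(2*k+2*e+3) - 1) * (X^(k+1) - 1) := by
          rw [show 2*k+2*e+3 = (k+1)+(k+e+1)+(e+1) by omega]
          ring
    _ = (X - 1)^2 * (X^(k+1) * qint (k+e+1)) * qint (e+1)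
        + (X - 1)^2 * (qint (2*k+2*e+3) * qint (k+1)) := by
          rw [h3, ← h2]; ring

lemma qint_zero : qint 0 = 0 := by simp [qint]

lemma qint_succ' (n : ℕ) : qint (n + 1) = 1 + X * qint n := by
  have h := qint_add 1 n
  have h1 : qint 1 = 1 := by simp [qint]
  rw [show 1 + n = n + 1 by omega] at h
  rw [h, h1, pow_one]

/-- The special case identity [k+1]·qbinom(2k+1,k) = [2k+1]·qbinom(2k,k). -/
lemma sp (k : ℕ) :
    qint (k+1) * qbinom (2*k+1) k = qint (2*k+1) * qbinom (2*k) k := by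
  apply mul_right_cancel₀ (mul_ne_zero (qfact_ne_zero k) (qfact_ne_zero (k+1)))
  have a : qbinom (2*k+1) k * (qfact k * qfact (k+1)) = qfact (2*k+1) :=
    qbinom_mul_qfact (2*k+1) k (k+1) (by omega)
  have b : qbinom (2*k) k * (qfact k * qfact k) = qfact (2*k) :=
    qbinom_mul_qfact (2*k) k k (by omega)
  have f1 : qfact (k+1) = qfact k * qint (k+1) := qfact_succ k
  have f2 : qfact (2*k+1) = qfact (2*k) * qint (2*k+1) := qfact_succ (2*k)
  linear_combination (qint (k+1)) * a - (qint (2*k+1) * qint (k+1)) * b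
    + (qint (k+1)) * f2 - (qint (2*k+1) * qbinom (2*k) k * qfact k) * f1

/-- [k]·qbinom(2k,k) = [k+1]·qbinom(2k,k+1). -/
lemma cl (k : ℕ) :
    qint k * qbinom (2*k) k = qint (k+1) * qbinom (2*k) (k+1) := by
  cases k with
  | zero =>
      rw [qint_zero]
      rw [show qbinom (2*0) (0+1) = 0 from rfl]
      ring
  | succ j =>
      rw [show 2*(j+1) = 2*j+2 by omega]
      apply mul_right_cancel₀ (mul_ne_zero (qfact_ne_zero (j+1))
        (mul_ne_zero (qfact_ne_zero j) (qfact_ne_zero (j+2))))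
      have a : qbinom (2*j+2) (j+1) * (qfact (j+1) * qfact (j+1)) = qfact (2*j+2) :=
        qbinom_mul_qfact (2*j+2) (j+1) (j+1) (by omega)
      have b : qbinom (2*j+2) (j+2) * (qfact (j+2) * qfact j) = qfact (2*j+2) :=
        qbinom_mul_qfact (2*j+2) (j+2) j (by omega)
      have f1 : qfact (j+1) = qfact j * qint (j+1) := qfact_succ j
      have f2 : qfact (j+2) = qfact (j+1) * qint (j+2) := qfact_succ (j+1)
      linear_combination
        (qint (j+1) * qbinom (2*j+2) (j+1) * qfact (j+1) * qfact j) * f2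
        + (qint (j+1) * qint (j+2) * qfact j) * a
        - (qint (j+2) * qfact (j+1)) * b
        - (qint (j+2) * qfact (2*j+2)) * f1

/-- q-Catalan cofactor identity. -/
lemma cat_mul (k : ℕ) :
    (qbinom (2*k) k - X * qbinom (2*k) (k+1)) * qint (k+1) = qbinom (2*k) k := by
  have qs : qint (k+1) = 1 + X * qint k := qint_succ' k
  have h := cl k
  linear_combination X * h + (qbinom (2*k) k) * qs

/-- The key induction-step identity. -/
lemma step (k e : ℕ) :
    X ^ (k+1) * (qint (k+e+1)^2 * (qbinom (2*k+e+1) k * qbinom (k+e) k * qbinom (2*k) k))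
      + qint (2*k+2*e+3) * qbinom (2*k+e+1) (2*k) * qbinom (2*k) k ^ 2 * qint (k+1)
    = qint (k+e+2)^2 * (qbinom (2*k+e+2) k * qbinom (k+e+1) k * qbinom (2*k) k) := by
  have hc : qfact k^4 * qfact (2*k) * qfact (k+e+2) * qfact (e+1) ≠ 0 := by
    exact mul_ne_zero (mul_ne_zero (mul_ne_zero (pow_ne_zero 4 (qfact_ne_zero k))
      (qfact_ne_zero (2*k))) (qfact_ne_zero (k+e+2))) (qfact_ne_zero (e+1))
  apply mul_right_cancel₀ hc
  have a1 : qbinom (2*k+e+2) k * (qfact k * qfact (k+e+2)) = qfact (2*k+e+2) :=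
    qbinom_mul_qfact (2*k+e+2) k (k+e+2) (by omega)
  have a2 : qbinom (k+e+1) k * (qfact k * qfact (e+1)) = qfact (k+e+1) :=
    qbinom_mul_qfact (k+e+1) k (e+1) (by omega)
  have a3 : qbinom (2*k) k * (qfact k * qfact k) = qfact (2*k) :=
    qbinom_mul_qfact (2*k) k k (by omega)
  have a4 : qbinom (2*k+e+1) k * (qfact k * qfact (k+e+1)) = qfact (2*k+e+1) :=
    qbinom_mul_qfact (2*k+e+1) k (k+e+1) (by omega)
  have a5 : qbinom (k+e) k * (qfact k * qfact e) = qfact (k+e) :=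
    qbinom_mul_qfact (k+e) k e (by omega)
  have a6 : qbinom (2*k+e+1) (2*k) * (qfact (2*k) * qfact (e+1)) = qfact (2*k+e+1) :=
    qbinom_mul_qfact (2*k+e+1) (2*k) (e+1) (by omega)
  have s1 : qfact (k+e+2) = qfact (k+e+1) * qint (k+e+2) := qfact_succ (k+e+1)
  have s2 : qfact (k+e+1) = qfact (k+e) * qint (k+e+1) := qfact_succ (k+e)
  have s3 : qfact (e+1) = qfact e * qint (e+1) := qfact_succ e
  have s4 : qfact (2*k+e+2) = qfact (2*k+e+1) * qint (2*k+e+2) := qfact_succ (2*k+e+1)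
  have st := star k e
  linear_combination
    (X^(k+1) * qint (k+e+1)^2 * qbinom (2*k+e+1) k * qbinom (k+e) k * qbinom (2*k) k
      * qfact k^4 * qfact (2*k) * qfact (e+1)) * s1
    + (X^(k+1) * qint (k+e+1)^2 * qbinom (2*k+e+1) k * qbinom (k+e) k * qbinom (2*k) k
      * qfact k^4 * qfact (2*k) * qfact (k+e+1) * qint (k+e+2)) * s3
    + (X^(k+1) * qint (k+e+1)^2 * qbinom (k+e) k * qbinom (2*k) k * qfact k^3
      * qfact (2*k) * qint (k+e+2) * qfact e * qint (e+1)) * a4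
    + (X^(k+1) * qint (k+e+1)^2 * qbinom (2*k) k * qfact k^2 * qfact (2*k)
      * qint (k+e+2) * qint (e+1) * qfact (2*k+e+1)) * a5
    + (X^(k+1) * qint (k+e+1)^2 * qfact (2*k) * qint (k+e+2) * qint (e+1)
      * qfact (2*k+e+1) * qfact (k+e)) * a3
    + (qint (2*k+2*e+3) * qbinom (2*k+e+1) (2*k) * qbinom (2*k) k * qint (k+1)
      * qfact k^2 * qfact (2*k) * qfact (k+e+2) * qfact (e+1)) * a3
    + (qint (2*k+2*e+3) * qbinom (2*k+e+1) (2*k) * qint (k+1) * qfact (2*k)^2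
      * qfact (k+e+2) * qfact (e+1)) * a3
    + (qint (2*k+2*e+3) * qint (k+1) * qfact (2*k)^2 * qfact (k+e+2)) * a6
    + (qint (2*k+2*e+3) * qint (k+1) * qfact (2*k)^2 * qfact (2*k+e+1)) * s1
    + (qint (2*k+2*e+3) * qint (k+1) * qfact (2*k)^2 * qfact (2*k+e+1)
      * qint (k+e+2)) * s2
    - (qint (k+e+2) * qfact (2*k)^2 * qfact (2*k+e+1) * qfact (k+e)
      * qint (k+e+1)) * st
    - (qint (k+e+2)^2 * qbinom (k+e+1) k * qbinom (2*k) k * qfact k^3 * qfact (2*k)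
      * qfact (e+1)) * a1
    - (qint (k+e+2)^2 * qbinom (2*k) k * qfact k^2 * qfact (2*k)
      * qfact (2*k+e+2)) * a2
    - (qint (k+e+2)^2 * qfact (2*k) * qfact (2*k+e+2) * qfact (k+e+1)) * a3
    - (qint (k+e+2)^2 * qfact (2*k)^2 * qfact (k+e+1)) * s4
    - (qint (k+e+2)^2 * qfact (2*k)^2 * qfact (2*k+e+1) * qint (2*k+e+2)) * s2

lemma main (k d : ℕ) :
    (∑ m ∈ Finset.Ico k (k+d),
        qint (2*m+1) * qbinom (m+k) (2*k) * (qbinom (2*k) k) ^ 2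
          * X ^ ((k+1)*(k+d-1-m))) * qint (k+1)
    = qint (k+d) ^ 2 * (qbinom (k+d+k) k * qbinom (k+d-1) k * qbinom (2*k) k) := by
  induction d with
  | zero =>
      rw [Nat.add_zero, Finset.Ico_self, Finset.sum_empty, zero_mul]
      cases k with
      | zero => rw [qint_zero]; ring
      | succ j =>
          rw [show j+1-1 = j from rfl, qbinom_eq_zero j (j+1) (by omega)]
          ring
  | succ d ih =>
      rw [show k + (d+1) = (k+d)+1 from rfl,
        Finset.sum_Ico_succ_top (Nat.le_add_right k d)]
      rw [show (k+d)+1-1 = k+d from rfl]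
      rw [Nat.sub_self, Nat.mul_zero, pow_zero, mul_one]
      have hs : (∑ m ∈ Finset.Ico k (k+d),
          qint (2*m+1) * qbinom (m+k) (2*k) * (qbinom (2*k) k) ^ 2
            * X ^ ((k+1)*(k+d-m)))
          = (∑ m ∈ Finset.Ico k (k+d),
          qint (2*m+1) * qbinom (m+k) (2*k) * (qbinom (2*k) k) ^ 2
            * X ^ ((k+1)*(k+d-1-m))) * X ^ (k+1) := by
        rw [Finset.sum_mul]
        apply Finset.sum_congr rfl
        intro m hm
        have hm' := (Finset.mem_Ico.mp hm).2
        rw [show k+d-m = (k+d-1-m)+1 by omega, Nat.mul_succ, pow_add]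
        ring
      rw [hs, add_mul, mul_assoc, mul_comm (X ^ (k+1)) (qint (k+1)),
        ← mul_assoc, ih]
      cases d with
      | zero =>
          rw [Nat.add_zero]
          have h0 : qint k ^ 2 * (qbinom (k+k) k * qbinom (k-1) k * qbinom (2*k) k)
              * X ^ (k+1) = 0 := by
            cases k with
            | zero => rw [qint_zero]; ring
            | succ j =>
                rw [show j+1-1 = j from rfl, qbinom_eq_zero j (j+1) (by omega)]
                ring
          rw [h0, zero_add]
          rw [show k+k = 2*k by omega, show k+1+k = 2*k+1 by omega,
            qbinom_self (2*k), qbinom_self k]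
          have h := sp k
          linear_combination (-(qint (k+1) * qbinom (2*k) k)) * h
      | succ e =>
          rw [show k+(e+1) = k+e+1 by omega, show k+e+1-1 = k+e from rfl,
            show k+e+1+k = 2*k+e+1 by omega, show 2*(k+e+1)+1 = 2*k+2*e+3 by omega,
            show k+e+1+1 = k+e+2 from rfl, show k+e+2+k = 2*k+e+2 by omega]
          have h := step k e
          linear_combination h

theorem stmt_15 (n : ℕ) (hn : 0 < n) (k : ℕ) (hk : k ≤ n - 1) :
    (qint n) ^ 2 ∣
      ∑ m ∈ Finset.Ico k n,
        qint (2 * m + 1) * qbinom (m + k) (2 * k) * (qbinom (2 * k) k) ^ 2 *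
          X ^ ((k + 1) * (n - 1 - m)) := by
  obtain ⟨d, rfl⟩ : ∃ d, n = k + d := ⟨n - k, by omega⟩
  refine ⟨qbinom (k+d+k) k * qbinom (k+d-1) k *
    (qbinom (2*k) k - X * qbinom (2*k) (k+1)), ?_⟩
  apply mul_right_cancel₀ (qint_ne_zero (k+1) (by omega))
  have h := main k d
  have hc := cat_mul k
  calc (∑ m ∈ Finset.Ico k (k+d),
        qint (2*m+1) * qbinom (m+k) (2*k) * (qbinom (2*k) k) ^ 2
          * X ^ ((k+1)*(k+d-1-m))) * qint (k+1)
      = qint (k+d) ^ 2 * (qbinom (k+d+k) k * qbinom (k+d-1) k * qbinom (2*k) k) := h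
    _ = qint (k+d) ^ 2 * (qbinom (k+d+k) k * qbinom (k+d-1) k *
          (qbinom (2*k) k - X * qbinom (2*k) (k+1))) * qint (k+1) := by
        linear_combination (-(qint (k+d) ^ 2 * qbinom (k+d+k) k * qbinom (k+d-1) k)) * hc
end
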